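/- (Anytime p-value properties.) Let (S_k) be an adapted process and for each α ∈ (0,1) let u_α(k) be continuous and strictly decreasing in α, with P(∃k: S_k > u_α(k)) ≤ α under the null. Define 𝔭_t = inf{α : ∃k ≤ t, S_k > u_α(k)}. Then (i) 𝔭_{t+j} ≤ 𝔭_t for all j, t > 0; (ii) under the null, P(∃t: 𝔭_t ≤ x) ≤ x for all x ∈ (0,1); and (iii) for any stopping time τ, P(𝔭_τ ≤ x) ≤ x for all x ∈ (0,1). -/

import Mathlib

open MeasureTheory ProbabilityTheory
open scoped ENNReal NNReal

/-- The anytime p-value `𝔭_t = inf{α ∈ (0,1) : ∃ k ≤ t, S_k > u_α(k)}` (with `inf ∅ = 1`). -/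
noncomputable def anytimePValue {Ω : Type*} (u : ℝ → ℕ → ℝ) (S : ℕ → Ω → ℝ)
    (t : ℕ) (ω : Ω) : ℝ :=
  sInf ({a : ℝ | a ∈ Set.Ioo (0:ℝ) 1 ∧ ∃ k ≤ t, u a k < S k ω} ∪ {1})

/-- Properties of the anytime p-value: it is nonincreasing in `t`; under the null it is
uniformly valid, `P(∃t : 𝔭_t ≤ x) ≤ x`; and it is valid at any stopping time `τ`. -/
theorem anytime_pvalue_properties {Ω : Type*} [m0 : MeasurableSpace Ω]
    (P : Measure Ω) [IsProbabilityMeasure P]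
    (ℱ : Filtration ℕ m0) (S : ℕ → Ω → ℝ) (hadapted : Adapted ℱ S)
    (u : ℝ → ℕ → ℝ)
    (hcont : ∀ k, ContinuousOn (fun a => u a k) (Set.Ioo (0:ℝ) 1))
    (hanti : ∀ k, StrictAntiOn (fun a => u a k) (Set.Ioo (0:ℝ) 1))
    (hnull : ∀ a ∈ Set.Ioo (0:ℝ) 1, P {ω | ∃ k, u a k < S k ω} ≤ ENNReal.ofReal a) :
    (∀ t j : ℕ, 0 < t → 0 < j → ∀ ω,
        anytimePValue u S (t + j) ω ≤ anytimePValue u S t ω)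
    ∧ (∀ x ∈ Set.Ioo (0:ℝ) 1,
        P {ω | ∃ t, anytimePValue u S t ω ≤ x} ≤ ENNReal.ofReal x)
    ∧ (∀ τ : Ω → ℕ, IsStoppingTime ℱ (fun ω => (τ ω : WithTop ℕ)) → ∀ x ∈ Set.Ioo (0:ℝ) 1,
        P {ω | anytimePValue u S (τ ω) ω ≤ x} ≤ ENNReal.ofReal x) := by
  have hbdd : ∀ (t : ℕ) (ω : Ω),
      BddBelow ({a : ℝ | a ∈ Set.Ioo (0:ℝ) 1 ∧ ∃ k ≤ t, u a k < S k ω} ∪ {1}) := by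
    intro t ω
    refine ⟨0, fun b hb => ?_⟩
    rcases hb with hb | hb
    · exact le_of_lt hb.1.1
    · simp only [Set.mem_singleton_iff] at hb; simp [hb]
  -- key inclusion
  have key : ∀ (x : ℝ), x ∈ Set.Ioo (0:ℝ) 1 → ∀ x', x < x' → x' < 1 →
      {ω | ∃ t, anytimePValue u S t ω ≤ x} ⊆ {ω | ∃ k, u x' k < S k ω} := by
    intro x hx x' hxx' hx'1 ω hω
    obtain ⟨t, ht⟩ := hω
    have hne : ({a : ℝ | a ∈ Set.Ioo (0:ℝ) 1 ∧ ∃ k ≤ t, u a k < S k ω} ∪ {1}).Nonempty :=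
      ⟨1, Or.inr rfl⟩
    have hlt : anytimePValue u S t ω < x' := lt_of_le_of_lt ht hxx'
    obtain ⟨a, ha, halt⟩ := exists_lt_of_csInf_lt hne hlt
    rcases ha with ha | ha
    · obtain ⟨haI, k, _, hu⟩ := ha
      refine ⟨k, lt_trans ?_ hu⟩
      exact hanti k haI ⟨lt_trans haI.1 halt, hx'1⟩ halt
    · simp only [Set.mem_singleton_iff] at ha
      rw [ha] at halt; linarith
  have part2 : ∀ x ∈ Set.Ioo (0:ℝ) 1,
      P {ω | ∃ t, anytimePValue u S t ω ≤ x} ≤ ENNReal.ofReal x := by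
    intro x hx
    refine ENNReal.le_of_forall_pos_le_add fun ε hε _ => ?_
    set d : ℝ := min (ε:ℝ) ((1 - x)/2) with hd
    have hd0 : 0 < d := lt_min (by exact_mod_cast hε) (by linarith [hx.2])
    have hxd1 : x + d < 1 := by
      have := min_le_right (ε:ℝ) ((1 - x)/2)
      have : d ≤ (1 - x)/2 := this
      linarith [hx.2]
    calc P {ω | ∃ t, anytimePValue u S t ω ≤ x}
        ≤ P {ω | ∃ k, u (x + d) k < S k ω} :=
          measure_mono (key x hx (x + d) (by linarith) hxd1)
      _ ≤ ENNReal.ofReal (x + d) := hnull (x + d) ⟨by linarith [hx.1], hxd1⟩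
      _ ≤ ENNReal.ofReal x + ε := by
          rw [ENNReal.ofReal_add (le_of_lt hx.1) (le_of_lt hd0)]
          gcongr
          calc ENNReal.ofReal d ≤ ENNReal.ofReal (ε : ℝ) :=
                ENNReal.ofReal_le_ofReal (min_le_left _ _)
            _ = (ε : ℝ≥0∞) := ENNReal.ofReal_coe_nnreal
  refine ⟨?_, part2, ?_⟩
  · intro t j _ _ ω
    refine csInf_le_csInf (hbdd (t + j) ω) ⟨1, Or.inr rfl⟩ ?_
    rintro a (⟨haI, k, hk, hu⟩ | ha)
    · exact Or.inl ⟨haI, k, le_trans hk (Nat.le_add_right t j), hu⟩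
    · exact Or.inr ha
  · intro τ _ x hx
    refine le_trans (measure_mono ?_) (part2 x hx)
    intro ω hω
    exact ⟨τ ω, hω⟩
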